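/- If x = (x_0, …, x_n) ∈ ℂ^{n+1} is a solution of the generalized Fermat system of type (k,n) and there exist indices 0 ≤ i < j ≤ n with x_i = 0 and x_j = 0, then x = 0. (Equivalently, the generalized Fermat curve C^k(λ) is disjoint from every coordinate subspace {x_i = x_j = 0} of ℙ^n(ℂ).) -/

import Mathlib

noncomputable section

/-- A solution of the generalized Fermat system of type `(k,n)`:
`x₀^k + x₁^k + x₂^k = 0` and `λ_j·x₀^k + x₁^k + x_{j+2}^k = 0` for `j = 1, …, n-2`
(here `lam` is 0-indexed, so `lam j` is `λ_{j+1}` and the last variable index is `j+3`). -/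
def gfSol (k n : ℕ) (hn : 3 ≤ n) (lam : Fin (n - 2) → ℂ) (x : Fin (n + 1) → ℂ) : Prop :=
  x ⟨0, by omega⟩ ^ k + x ⟨1, by omega⟩ ^ k + x ⟨2, by omega⟩ ^ k = 0 ∧
    ∀ j : Fin (n - 2),
      lam j * x ⟨0, by omega⟩ ^ k + x ⟨1, by omega⟩ ^ k +
        x ⟨(j : ℕ) + 3, by have := j.2; omega⟩ ^ k = 0

theorem generalized_fermat_disjoint_from_coordinate_subspaces (k n : ℕ) (hk : 2 ≤ k) (hn : 3 ≤ n)
    (lam : Fin (n - 2) → ℂ) (hl0 : ∀ j, lam j ≠ 0) (hl1 : ∀ j, lam j ≠ 1)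
    (hinj : Function.Injective lam)
    (x : Fin (n + 1) → ℂ) (hx : gfSol k n hn lam x)
    (i j : Fin (n + 1)) (hij : i < j) (hxi : x i = 0) (hxj : x j = 0) :
    x = 0 := by
  obtain ⟨h1, h2⟩ := hx
  have hk0 : k ≠ 0 := by omega
  set c : ℕ → ℂ := fun m => if h : 3 ≤ m ∧ m ≤ n then lam ⟨m - 3, by omega⟩ else 1 with hc
  have hceq : ∀ m : ℕ, ∀ (hm2 : 2 ≤ m) (hmn : m ≤ n),
      c m * x ⟨0, by omega⟩ ^ k + x ⟨1, by omega⟩ ^ k + x ⟨m, by omega⟩ ^ k = 0 := by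
    intro m hm2 hmn
    rcases eq_or_lt_of_le hm2 with h | h
    · subst h
      simp only [hc]
      rw [dif_neg (by omega), one_mul]
      exact h1
    · have h3 : 3 ≤ m := h
      have hh := h2 ⟨m - 3, by omega⟩
      simp only [show m - 3 + 3 = m from by omega] at hh
      simp only [hc]
      rw [dif_pos ⟨h3, hmn⟩]
      exact hh
  have hcne0 : ∀ m : ℕ, 2 ≤ m → m ≤ n → c m ≠ 0 := by
    intro m hm2 hmn
    by_cases h3 : 3 ≤ m
    · simp only [hc]; rw [dif_pos ⟨h3, hmn⟩]; exact hl0 _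
    · simp only [hc]; rw [dif_neg (by omega)]; exact one_ne_zero
  have hcinj : ∀ m m' : ℕ, 2 ≤ m → m < m' → m' ≤ n → c m ≠ c m' := by
    intro m m' hm2 hmm' hm'n
    have hm'3 : 3 ≤ m' := by omega
    by_cases h3 : 3 ≤ m
    · simp only [hc]
      rw [dif_pos ⟨h3, by omega⟩, dif_pos ⟨hm'3, hm'n⟩]
      intro heq
      have := hinj heq
      rw [Fin.mk.injEq] at this
      omega
    · simp only [hc]
      rw [dif_neg (by omega), dif_pos ⟨hm'3, hm'n⟩]
      exact fun heq => hl1 _ heq.symm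
  have hjn : (j : ℕ) ≤ n := by have := j.2; omega
  have hin : (i : ℕ) ≤ n := by have := i.2; omega
  have hijn : (i : ℕ) < (j : ℕ) := hij
  have key : x ⟨0, by omega⟩ ^ k = 0 ∧ x ⟨1, by omega⟩ ^ k = 0 := by
    rcases Nat.lt_or_ge (j : ℕ) 2 with hj2 | hj2
    · -- i.val = 0, j.val = 1
      have e0 : x ⟨0, by omega⟩ = x i := congrArg x (Fin.ext (by show (i : ℕ) = 0; omega)).symm
      have e1 : x ⟨1, by omega⟩ = x j := congrArg x (Fin.ext (by simp; omega)).symm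
      rw [e0, e1, hxi, hxj, zero_pow hk0]
      exact ⟨rfl, rfl⟩
    · have hEj : c (j : ℕ) * x ⟨0, by omega⟩ ^ k + x ⟨1, by omega⟩ ^ k + x j ^ k = 0 := by
        have := hceq j hj2 hjn; exact this
      rw [hxj, zero_pow hk0, add_zero] at hEj
      rcases Nat.lt_or_ge (i : ℕ) 2 with hi2 | hi2
      · rcases Nat.lt_or_ge (i : ℕ) 1 with hi1 | hi1
        · -- i.val = 0
          have e0 : x ⟨0, by omega⟩ = x i := congrArg x (Fin.ext (by show (i : ℕ) = 0; omega)).symm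
          have h0 : x ⟨0, by omega⟩ ^ k = 0 := by rw [e0, hxi, zero_pow hk0]
          rw [h0, mul_zero, zero_add] at hEj
          exact ⟨h0, hEj⟩
        · -- i.val = 1
          have e1 : x ⟨1, by omega⟩ = x i := congrArg x (Fin.ext (by simp; omega)).symm
          have h1x : x ⟨1, by omega⟩ ^ k = 0 := by rw [e1, hxi, zero_pow hk0]
          rw [h1x, add_zero] at hEj
          have h0 : x ⟨0, by omega⟩ ^ k = 0 :=
            (mul_eq_zero.mp hEj).resolve_left (hcne0 _ hj2 hjn)
          exact ⟨h0, h1x⟩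
      · -- both ≥ 2
        have hEi : c (i : ℕ) * x ⟨0, by omega⟩ ^ k + x ⟨1, by omega⟩ ^ k + x i ^ k = 0 := by
          have := hceq i hi2 hin
          exact this
        rw [hxi, zero_pow hk0, add_zero] at hEi
        have hsub : (c (i : ℕ) - c (j : ℕ)) * x ⟨0, by omega⟩ ^ k = 0 := by
          linear_combination hEi - hEj
        have hne : c (i : ℕ) - c (j : ℕ) ≠ 0 :=
          sub_ne_zero.mpr (hcinj _ _ hi2 hijn hjn)
        have h0 : x ⟨0, by omega⟩ ^ k = 0 := (mul_eq_zero.mp hsub).resolve_left hne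
        have h1x : x ⟨1, by omega⟩ ^ k = 0 := by
          rw [h0, mul_zero, zero_add] at hEi; exact hEi
        exact ⟨h0, h1x⟩
  obtain ⟨h0, h1x⟩ := key
  funext m
  rcases m with ⟨m, hm⟩
  have hpow : x ⟨m, hm⟩ ^ k = 0 := by
    rcases Nat.lt_or_ge m 2 with h | h
    · interval_cases m
      · exact h0
      · exact h1x
    · have hm' := hceq m h (by omega)
      rw [h0, h1x, mul_zero, zero_add, zero_add] at hm'
      exact hm'
  have := pow_eq_zero_iff hk0 |>.mp hpow
  simpa using this
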